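/- arXiv:2510.10662 — 5 statements merged into one kernel-verified Lean document; each statement's English description precedes it below -/
import Mathlib

section
/- Let (𝔄, 𝔄₀) be a *-semisimple CQ*-algebra with unit I. If α ∈ ℂ is a generalized eigenvalue of X ∈ 𝔄 (i.e., there exist φ ∈ P(𝔄) and A ∈ 𝔄₀ with φ(A,A) > 0 and φ(XA − αA, B) = 0 for all B ∈ 𝔄₀), then X − αI has no generalized left inverse, i.e., there is no Y ∈ 𝔄 with φ((X−αI)A, Y*B) = φ(A,B) for all bounded invariant positive sesquilinear forms φ with constant ≤ 1 and all A, B ∈ 𝔄₀. -/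
open scoped ComplexOrder

/-- The set `P_{𝔄₀}(𝔄)` of bounded invariant positive sesquilinear forms, with
explicit bound constant `γ`. -/
def IsIPS {A₀ A : Type*} [NormedRing A₀] [StarRing A₀] [NormedAlgebra ℂ A₀]
    [NormedAddCommGroup A] [NormedSpace ℂ A] [Star A]
    (j : A₀ →ₗ[ℂ] A) (mulR : A → A₀ → A) (φ : A → A → ℂ) (γ : ℝ) : Prop :=
  (∀ X : A, 0 ≤ φ X X) ∧
  (∀ X Y Z : A, φ (X + Y) Z = φ X Z + φ Y Z) ∧
  (∀ X Y Z : A, φ X (Y + Z) = φ X Y + φ X Z) ∧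
  (∀ (c : ℂ) (X Y : A), φ (c • X) Y = c * φ X Y) ∧
  (∀ (c : ℂ) (X Y : A), φ X (c • Y) = (starRingEnd ℂ c) * φ X Y) ∧
  (∀ (X : A) (a b : A₀), φ (mulR X a) (j b) = φ (j a) (mulR (star X) b)) ∧
  (∀ X Y : A, ‖φ X Y‖ ≤ γ * ‖X‖ * ‖Y‖)

/-- in a *-semisimple CQ*-algebra with unit, if `α` is a generalized
eigenvalue of `X` then `X - αI` has no generalized left inverse. -/
theorem stmt7 {A₀ : Type*} [NormedRing A₀] [StarRing A₀] [CStarRing A₀]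
    [NormedAlgebra ℂ A₀] [StarModule ℂ A₀] [NormedStarGroup A₀]
    {A : Type*} [NormedAddCommGroup A] [NormedSpace ℂ A] [Star A]
    (j : A₀ →ₗ[ℂ] A) (hj_dense : DenseRange j)
    (mulR : A → A₀ → A)
    -- the module product 𝔄 × 𝔄₀ → 𝔄 is linear in the first variable and extends
    -- the multiplication of 𝔄₀:
    (hm_add : ∀ (X Y : A) (a : A₀), mulR (X + Y) a = mulR X a + mulR Y a)
    (hm_sub : ∀ (X Y : A) (a : A₀), mulR (X - Y) a = mulR X a - mulR Y a)
    (hm_smul : ∀ (c : ℂ) (X : A) (a : A₀), mulR (c • X) a = c • mulR X a)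
    (hm_mul : ∀ a b : A₀, mulR (j a) b = j (a * b))
    -- *-semisimplicity:
    (hss : ∀ Y : A, Y ≠ 0 → ∃ ψ : A → A → ℂ, IsIPS j mulR ψ 1 ∧ 0 < ψ Y Y)
    -- α is a generalized eigenvalue of X, witnessed by φ ∈ P(𝔄) and A ∈ 𝔄₀:
    (X : A) (α : ℂ)
    (φ : A → A → ℂ) (γ : ℝ) (hγ : 0 < γ) (hφ : IsIPS j mulR φ γ) (hφ_ne : φ ≠ 0)
    (a : A₀) (ha : 0 < φ (j a) (j a))
    (heig : ∀ b : A₀, φ (mulR X a - α • j a) (j b) = 0) :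
    ¬ ∃ Y : A, ∀ (ψ : A → A → ℂ), IsIPS j mulR ψ 1 →
        ∀ b c : A₀, ψ (mulR (X - α • j 1) b) (mulR (star Y) c) = ψ (j b) (j c) := by
  rintro ⟨Y, hY⟩
  obtain ⟨hpos, haddl, haddr, hsmull, hsmulr, hinv, hbd⟩ := hφ
  -- second-variable subtraction
  have hsub2 : ∀ Z W W' : A, φ Z (W - W') = φ Z W - φ Z W' := by
    intro Z W W'
    have h1 := haddr Z W' (W - W')
    rw [add_sub_cancel] at h1
    linear_combination -h1
  -- continuity in the second variable
  have hcont : ∀ Z : A, Continuous (φ Z) := by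
    intro Z
    refine (LipschitzWith.of_dist_le_mul (K := (γ * ‖Z‖).toNNReal)
      (f := φ Z) ?_).continuous
    intro W W'
    have h1 : dist (φ Z W) (φ Z W') = ‖φ Z (W - W')‖ := by
      rw [hsub2, Complex.dist_eq]
    rw [h1]
    have h2 := hbd Z (W - W')
    have h3 : ((γ * ‖Z‖).toNNReal : ℝ) = γ * ‖Z‖ :=
      Real.coe_toNNReal _ (by positivity)
    rw [h3]
    calc ‖φ Z (W - W')‖ ≤ γ * ‖Z‖ * ‖W - W'‖ := h2
      _ = γ * ‖Z‖ * dist W W' := by rw [dist_eq_norm]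
  -- vanishing on the dense range extends to all of A
  have hzero : ∀ Z : A, (∀ b : A₀, φ Z (j b) = 0) → ∀ W : A, φ Z W = 0 := by
    intro Z h W
    have heq : (φ Z) = fun _ : A => (0 : ℂ) := by
      refine Continuous.ext_on hj_dense (hcont Z) continuous_const ?_
      rintro x ⟨b, rfl⟩
      exact h b
    exact congrFun heq W
  set E : A := mulR X a - α • j a with hEdef
  have hE : mulR (X - α • j 1) a = E := by
    rw [hm_sub, hm_smul, hm_mul, one_mul]
  -- the rescaled form ψ has bound 1
  set ψ : A → A → ℂ := fun U V => (γ⁻¹ : ℝ) * φ U V with hψdef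
  have hγ' : (0:ℝ) < γ⁻¹ := by positivity
  have hψ : IsIPS j mulR ψ 1 := by
    refine ⟨?_, ?_, ?_, ?_, ?_, ?_, ?_⟩
    · intro W
      have : (0:ℂ) ≤ ((γ⁻¹ : ℝ) : ℂ) := by
        rw [Complex.zero_le_real]; exact hγ'.le
      exact mul_nonneg this (hpos W)
    · intro U V W; simp only [hψdef, haddl]; ring
    · intro U V W; simp only [hψdef, haddr]; ring
    · intro c U V; simp only [hψdef, hsmull]; ring
    · intro c U V; simp only [hψdef, hsmulr]; ring
    · intro W b c; simp only [hψdef, hinv]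
    · intro U V
      simp only [hψdef, norm_mul, Complex.norm_real, Real.norm_eq_abs, abs_of_nonneg hγ'.le]
      have := hbd U V
      calc γ⁻¹ * ‖φ U V‖ ≤ γ⁻¹ * (γ * ‖U‖ * ‖V‖) := by
            apply mul_le_mul_of_nonneg_left this hγ'.le
        _ = 1 * ‖U‖ * ‖V‖ := by field_simp
  have h1 : ∀ c : A₀, φ (j a) (j c) = 0 := by
    intro c
    have h2 := hY ψ hψ a c
    rw [hE] at h2
    have hEz : φ E (mulR (star Y) c) = 0 := hzero E heig _
    simp only [hψdef, hEz, mul_zero] at h2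
    have hne : ((γ⁻¹ : ℝ) : ℂ) ≠ 0 := by
      exact_mod_cast hγ'.ne'
    exact (mul_eq_zero.mp h2.symm).resolve_left hne
  have h2 : φ (j a) (j a) = 0 := hzero (j a) h1 (j a)
  exact absurd h2 ha.ne'
end

section
/- Let X be a normal element of a *-semisimple CQ*-algebra (𝔄, 𝔄₀), with cartesian decomposition X = U + iV where U = U*, V = V*. Then φ(UA, VA) = φ(VA, UA) for every bounded invariant positive sesquilinear form φ and every A ∈ 𝔄₀. -/
open scoped ComplexOrder

/-- if `X = U + iV` is the cartesian decomposition of a normal element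
of a *-semisimple CQ*-algebra, then `φ(UA, VA) = φ(VA, UA)` for every bounded
invariant positive sesquilinear form `φ` and every `A ∈ 𝔄₀`. -/
theorem stmt8 {A₀ : Type*} [NormedRing A₀] [StarRing A₀] [CStarRing A₀]
    [NormedAlgebra ℂ A₀] [StarModule ℂ A₀] [NormedStarGroup A₀]
    {A : Type*} [NormedAddCommGroup A] [NormedSpace ℂ A] [Star A]
    (j : A₀ →ₗ[ℂ] A) (hj_dense : DenseRange j)
    (mulR : A → A₀ → A)
    (hm_add : ∀ (X Y : A) (a : A₀), mulR (X + Y) a = mulR X a + mulR Y a)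
    (hm_sub : ∀ (X Y : A) (a : A₀), mulR (X - Y) a = mulR X a - mulR Y a)
    (hm_smul : ∀ (c : ℂ) (X : A) (a : A₀), mulR (c • X) a = c • mulR X a)
    -- involution on 𝔄:
    (hstar_star : ∀ X : A, star (star X) = X)
    (hstar_add : ∀ X Y : A, star (X + Y) = star X + star Y)
    (hstar_sub : ∀ X Y : A, star (X - Y) = star X - star Y)
    (hstar_smul : ∀ (c : ℂ) (X : A), star (c • X) = (starRingEnd ℂ c) • star X)
    -- *-semisimplicity:
    (hss : ∀ Y : A, Y ≠ 0 → ∃ ψ : A → A → ℂ, IsIPS j mulR ψ 1 ∧ 0 < ψ Y Y)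
    -- X normal, with cartesian decomposition X = U + iV:
    (X : A)
    (hX_normal : ∀ (φ : A → A → ℂ) (γ : ℝ), 0 < γ → IsIPS j mulR φ γ →
      ∀ a : A₀, φ (mulR X a) (mulR X a) = φ (mulR (star X) a) (mulR (star X) a))
    (U V : A)
    (hU : U = (2 : ℂ)⁻¹ • (X + star X))
    (hV : V = (2 * Complex.I)⁻¹ • (X - star X)) :
    ∀ (φ : A → A → ℂ) (γ : ℝ), 0 < γ → IsIPS j mulR φ γ →
      ∀ a : A₀, φ (mulR U a) (mulR V a) = φ (mulR V a) (mulR U a) := by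
  intro φ γ hγ hφ a
  have e := hX_normal φ γ hγ hφ a
  obtain ⟨_, haddl, haddr, hsmull, hsmulr, _, _⟩ := hφ
  have h1 : X = U + Complex.I • V := by
    rw [hU, hV]
    match_scalars <;> field_simp <;> ring
  have h2 : star X = U + (-Complex.I) • V := by
    rw [hU, hV]
    match_scalars <;> field_simp <;> ring
  rw [h2, h1, hm_add, hm_add, hm_smul, hm_smul] at e
  simp only [haddl, haddr, hsmull, hsmulr, Complex.conj_I, map_neg, 
    neg_mul, neg_neg] at e
  have h2I : (2 * Complex.I) ≠ 0 := by simp [Complex.I_ne_zero]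
  apply mul_left_cancel₀ h2I
  linear_combination -e
end

section
/- A normal element X of a *-semisimple CQ*-algebra satisfies, for every φ ∈ P(𝔄), every A ∈ 𝔄₀ and every α ∈ ℂ: φ(XA − αA, XA − αA) = φ(X*A − ᾱA, X*A − ᾱA). Consequently, φ is a generalized eigenvector of X with eigenvalue α if and only if φ is a generalized eigenvector of X* with eigenvalue ᾱ. -/
open scoped ComplexOrder

/-- `φ` is a generalized eigenvector of `X` with generalized eigenvalue `α`:
there is `A ∈ 𝔄₀` with `φ(A,A) > 0` and `φ(XA - αA, XA - αA) = 0`. -/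
def IsGenEigenvector {A₀ A : Type*} [NormedRing A₀] [StarRing A₀]
    [NormedAlgebra ℂ A₀] [NormedAddCommGroup A] [NormedSpace ℂ A] [Star A]
    (j : A₀ →ₗ[ℂ] A) (mulR : A → A₀ → A) (φ : A → A → ℂ) (X : A) (α : ℂ) : Prop :=
  ∃ a : A₀, 0 < φ (j a) (j a) ∧
    φ (mulR X a - α • j a) (mulR X a - α • j a) = 0

/-- a normal element `X` of a *-semisimple CQ*-algebra satisfies
`φ(XA - αA, XA - αA) = φ(X*A - ᾱA, X*A - ᾱA)` for every `φ ∈ P(𝔄)`, `A ∈ 𝔄₀`,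
`α ∈ ℂ`; consequently `φ` is a generalized eigenvector of `X` with eigenvalue `α`
iff it is a generalized eigenvector of `X*` with eigenvalue `ᾱ`. -/
theorem stmt9 {A₀ : Type*} [NormedRing A₀] [StarRing A₀] [CStarRing A₀]
    [NormedAlgebra ℂ A₀] [StarModule ℂ A₀] [NormedStarGroup A₀]
    {A : Type*} [NormedAddCommGroup A] [NormedSpace ℂ A] [Star A]
    (j : A₀ →ₗ[ℂ] A) (hj_dense : DenseRange j)
    (mulR : A → A₀ → A)
    (hm_add : ∀ (X Y : A) (a : A₀), mulR (X + Y) a = mulR X a + mulR Y a)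
    (hm_sub : ∀ (X Y : A) (a : A₀), mulR (X - Y) a = mulR X a - mulR Y a)
    (hm_smul : ∀ (c : ℂ) (X : A) (a : A₀), mulR (c • X) a = c • mulR X a)
    (hstar_star : ∀ X : A, star (star X) = X)
    (hstar_add : ∀ X Y : A, star (X + Y) = star X + star Y)
    (hstar_smul : ∀ (c : ℂ) (X : A), star (c • X) = (starRingEnd ℂ c) • star X)
    -- *-semisimplicity:
    (hss : ∀ Y : A, Y ≠ 0 → ∃ ψ : A → A → ℂ, IsIPS j mulR ψ 1 ∧ 0 < ψ Y Y)
    -- X normal: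
    (X : A)
    (hX_normal : ∀ (φ : A → A → ℂ) (γ : ℝ), 0 < γ → IsIPS j mulR φ γ →
      ∀ a : A₀, φ (mulR X a) (mulR X a) = φ (mulR (star X) a) (mulR (star X) a)) :
    (∀ (φ : A → A → ℂ) (γ : ℝ), 0 < γ → IsIPS j mulR φ γ → ∀ (a : A₀) (α : ℂ),
        φ (mulR X a - α • j a) (mulR X a - α • j a)
          = φ (mulR (star X) a - (starRingEnd ℂ α) • j a)
              (mulR (star X) a - (starRingEnd ℂ α) • j a)) ∧
    (∀ (φ : A → A → ℂ) (γ : ℝ), 0 < γ → IsIPS j mulR φ γ → ∀ α : ℂ,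
        (IsGenEigenvector j mulR φ X α ↔
          IsGenEigenvector j mulR φ (star X) (starRingEnd ℂ α))) := by

  have key : ∀ (φ : A → A → ℂ) (γ : ℝ), 0 < γ → IsIPS j mulR φ γ → ∀ (a : A₀) (α : ℂ),
      φ (mulR X a - α • j a) (mulR X a - α • j a)
        = φ (mulR (star X) a - (starRingEnd ℂ α) • j a)
            (mulR (star X) a - (starRingEnd ℂ α) • j a) := by
    intro φ γ hγ hips a α
    obtain ⟨hpos, haddL, haddR, hsmulL, hsmulR, hinv, hbd⟩ := hips
    have subL : ∀ U V W : A, φ (U - V) W = φ U W - φ V W := by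
      intro U V W
      have h := haddL (U - V) V W
      rw [sub_add_cancel] at h
      exact eq_sub_of_add_eq h.symm
    have subR : ∀ U V W : A, φ U (V - W) = φ U V - φ U W := by
      intro U V W
      have h := haddR U (V - W) W
      rw [sub_add_cancel] at h
      exact eq_sub_of_add_eq h.symm
    have expand : ∀ (U B : A) (c : ℂ), φ (U - c • B) (U - c • B)
        = φ U U - (starRingEnd ℂ c) * φ U B - c * φ B U
          + c * (starRingEnd ℂ c) * φ B B := by
      intro U B c
      rw [subL, subR, subR, hsmulL, hsmulL, hsmulR, hsmulR]
      ring
    have e1 := hX_normal φ γ hγ ⟨hpos, haddL, haddR, hsmulL, hsmulR, hinv, hbd⟩ a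
    have e2 := hinv X a a
    have e3 := hinv (star X) a a
    rw [hstar_star] at e3
    rw [expand, expand, e1, e2, e3, Complex.conj_conj]
    ring
  refine ⟨key, ?_⟩
  intro φ γ hγ hips α
  constructor
  · rintro ⟨a, hpos, heq⟩
    exact ⟨a, hpos, by rw [← key φ γ hγ hips a α]; exact heq⟩
  · rintro ⟨a, hpos, heq⟩
    exact ⟨a, hpos, by rw [key φ γ hγ hips a α]; exact heq⟩
end

section
/- If X = X* in a CQ*-algebra and α is a generalized eigenvalue of X (i.e., there exist φ ∈ P(𝔄) and A ∈ 𝔄₀ with φ(A,A) > 0 and φ(XA − αA, XA − αA) = 0), then α is real. -/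
open scoped ComplexOrder

/-- if `X = X*` in a CQ*-algebra and `α` is a generalized eigenvalue of
`X` (witnessed by some `φ ∈ P(𝔄)` and `A ∈ 𝔄₀` with `φ(A,A) > 0` and
`φ(XA - αA, XA - αA) = 0`), then `α` is real. -/
theorem stmt10 {A₀ : Type*} [NormedRing A₀] [StarRing A₀] [CStarRing A₀]
    [NormedAlgebra ℂ A₀] [StarModule ℂ A₀] [NormedStarGroup A₀]
    {A : Type*} [NormedAddCommGroup A] [NormedSpace ℂ A] [Star A]
    (j : A₀ →ₗ[ℂ] A) (hj_dense : DenseRange j)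
    (mulR : A → A₀ → A)
    (X : A) (hX : star X = X) (α : ℂ)
    (φ : A → A → ℂ) (γ : ℝ) (hγ : 0 < γ) (hφ : IsIPS j mulR φ γ)
    (a : A₀) (ha : 0 < φ (j a) (j a))
    (heig : φ (mulR X a - α • j a) (mulR X a - α • j a) = 0) :
    α.im = 0 := by
  obtain ⟨hpos, haddl, haddr, hsml, hsmr, hinv, hbd⟩ := hφ
  have him0 : ∀ x : A, (φ x x).im = 0 := fun x => ((Complex.le_def.mp (hpos x)).2).symm
  have hre0 : ∀ x : A, 0 ≤ (φ x x).re := fun x => (Complex.le_def.mp (hpos x)).1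
  -- Hermitian symmetry
  have hherm : ∀ x y : A, φ y x = starRingEnd ℂ (φ x y) := by
    intro x y
    have h1 : (φ (x + y) (x + y)).im = 0 := him0 _
    have h2 : (φ (x + Complex.I • y) (x + Complex.I • y)).im = 0 := him0 _
    rw [haddl, haddr, haddr] at h1
    rw [haddl, haddr, haddr, hsml, hsmr, hsmr, hsml] at h2
    simp only [Complex.add_im, him0, Complex.mul_im, Complex.mul_re,
      Complex.conj_re, Complex.conj_im, Complex.I_re, Complex.I_im] at h1 h2
    apply Complex.ext <;> simp only [Complex.conj_re, Complex.conj_im] <;> nlinarith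
  -- φ v (j a) = 0 where v is the "eigenvector defect"
  set v : A := mulR X a - α • j a with hv
  set y : A := j a
  set c : ℂ := φ v y with hc
  have hc0 : c = 0 := by
    by_contra hne
    have hns : 0 < Complex.normSq c := by
      have := Complex.normSq_pos.mpr hne
      linarith
    set s : ℝ := ((φ y y).re + 1) / (2 * Complex.normSq c) with hs
    set t : ℂ := (-s : ℂ) * starRingEnd ℂ c with ht
    have hexp : φ (y + t • v) (y + t • v)
        = φ y y + starRingEnd ℂ t * φ y v + (t * φ v y + t * starRingEnd ℂ t * φ v v) := by
      rw [haddl, haddr, haddr, hsml, hsml, hsmr, hsmr]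
      ring
    rw [heig, mul_zero, add_zero, hherm v y, ← hc] at hexp
    have h3 : 0 ≤ (φ (y + t • v) (y + t • v)).re := hre0 _
    rw [hexp] at h3
    have htc : t * c = (-s : ℂ) * (Complex.normSq c : ℂ) := by
      rw [ht]; rw [mul_assoc, mul_comm (starRingEnd ℂ c) c, Complex.mul_conj]
    have htc2 : starRingEnd ℂ t * starRingEnd ℂ c = starRingEnd ℂ (t * c) :=
      (map_mul (starRingEnd ℂ) t c).symm
    rw [htc2, htc] at h3
    have hre : (φ y y).re + (-s) * Complex.normSq c + (-s) * Complex.normSq c ≤ 0 ∨ True := Or.inr trivial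
    have h4 : (φ y y).re - 2 * (s * Complex.normSq c) ≥ 0 := by
      have : (starRingEnd ℂ ((-s : ℂ) * (Complex.normSq c : ℂ))).re
          = -s * Complex.normSq c := by
        simp [Complex.ext_iff]
      simp only [Complex.add_re, this] at h3
      have : ((-s : ℂ) * (Complex.normSq c : ℂ)).re = -s * Complex.normSq c := by
        simp [Complex.ext_iff]
      rw [this] at h3
      linarith
    have hsc : s * Complex.normSq c = ((φ y y).re + 1) / 2 := by
      rw [hs]; field_simp
    rw [hsc] at h4
    linarith
  -- from c = 0 : φ (X a) (j a) = α * φ (j a) (j a)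
  have hexp2 : φ (mulR X a) y = α * φ y y := by
    have : v = mulR X a + (-α) • (j a) := by rw [hv, sub_eq_add_neg, neg_smul]
    have h := hc0
    rw [hc, this, haddl, hsml] at h
    have := h
    linear_combination h
  -- φ (X a) (j a) is real
  have hreal : (φ (mulR X a) y).im = 0 := by
    have h1 : φ (mulR X a) (j a) = φ (j a) (mulR (star X) a) := hinv X a a
    rw [hX] at h1
    have h2 : φ (j a) (mulR X a) = starRingEnd ℂ (φ (mulR X a) (j a)) := hherm _ _
    rw [h2] at h1
    have := congrArg Complex.im h1
    simp only [Complex.conj_im] at this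
    linarith
  have hrim : (φ y y).im = 0 := him0 y
  have hrre : 0 < (φ y y).re := (Complex.lt_def.mp ha).1
  rw [hexp2] at hreal
  simp only [Complex.mul_im, hrim, mul_zero, add_zero, zero_add] at hreal
  rcases mul_eq_zero.mp hreal with h | h
  · exact h
  · exact absurd h (ne_of_gt hrre)
end

section
/- Let ω̄ be a nondegenerate ground state for H = H* ∈ 𝔄 with ground energy α₊ (Ker(π_ω̄(H) − α₊I) = ℂλ_ω(I)). Then ω̄ is gapped with gap Δ > 0 (i.e., ω̄(A*HA) ≥ (α₊ + Δ)ω(A*A) for all A ∈ 𝔄₀ with λ_ω(A) ⟂ λ_ω(I)) if and only if −i ω̄(A* δ_H(A)) ≥ Δ(ω(A*A) − |ω(A)|²) for all A ∈ 𝔄₀. -/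
/-- let `ω̄` be a nondegenerate ground state for `H = H* ∈ 𝔄` with
ground energy `αg`, realized in its GNS representation by the symmetric operator
`T = π_ω̄(H)` on the GNS space, with cyclic map `Λ = λ_ω` (so that
`ω(A) = ⟨Λ A, Λ 1⟩`, `ω(A*A) = ‖Λ A‖²` and `ω̄(A*HA) = ⟨T(Λ A), Λ A⟩`).
Then `ω̄` is gapped with some gap `Δ > 0` iff there is `Δ > 0` with
`-i ω̄(A* δ_H(A)) = ⟨(T - αg)Λ A, Λ A⟩ ≥ Δ(ω(A*A) - |ω(A)|²)` for all `A ∈ 𝔄₀`. -/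
theorem stmt18 {A₀ : Type*} [NormedRing A₀] [StarRing A₀] [CStarRing A₀]
    [NormedAlgebra ℂ A₀] [StarModule ℂ A₀] [NormedStarGroup A₀]
    {Hω : Type*} [NormedAddCommGroup Hω] [InnerProductSpace ℂ Hω]
    -- the GNS vector map Λ = λ_ω, with cyclic vector Λ 1 of norm one (ω(I) = 1):
    (Λ : A₀ →ₗ[ℂ] Hω) (hΛ1 : ‖Λ (1 : A₀)‖ = 1)
    -- T = π_ω̄(H), symmetric since H = H*:
    (T : Hω →ₗ[ℂ] Hω)
    (hT_symm : ∀ x y : Hω, (inner ℂ (T x) y : ℂ) = inner ℂ x (T y))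
    (αg : ℝ)
    -- ω̄ is an eigenstate of H with eigenvalue αg: π(H)λ(I) = αg λ(I):
    (heig : T (Λ 1) = (αg : ℂ) • Λ 1)
    -- ground state: ⟨π(H)ξ, ξ⟩ ≥ αg ‖ξ‖² on λ(𝔄₀):
    (hground : ∀ a : A₀, αg * ‖Λ a‖ ^ 2 ≤ (inner ℂ (T (Λ a)) (Λ a) : ℂ).re)
    -- nondegeneracy: Ker(π(H) - αg I) = ℂ λ(I):
    (hnondeg : ∀ a : A₀, T (Λ a) = (αg : ℂ) • Λ a → ∃ c : ℂ, Λ a = c • Λ 1) :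
    -- gapped  ↔  -i ω̄(A*δ_H(A)) ≥ Δ(ω(A*A) - |ω(A)|²)
    (∃ Δ > (0 : ℝ), ∀ a : A₀, (inner ℂ (Λ a) (Λ (1 : A₀)) : ℂ) = 0 →
        (αg + Δ) * ‖Λ a‖ ^ 2 ≤ (inner ℂ (T (Λ a)) (Λ a) : ℂ).re) ↔
    (∃ Δ > (0 : ℝ), ∀ a : A₀,
        Δ * (‖Λ a‖ ^ 2 - ‖(inner ℂ (Λ a) (Λ (1 : A₀)) : ℂ)‖ ^ 2)
          ≤ (inner ℂ (T (Λ a)) (Λ a) : ℂ).re - αg * ‖Λ a‖ ^ 2) := by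
  constructor
  · rintro ⟨Δ, hΔ, hgap⟩
    refine ⟨Δ, hΔ, fun a => ?_⟩
    set c : ℂ := inner ℂ (Λ a) (Λ 1) with hc
    set b : A₀ := a - (starRingEnd ℂ c) • 1 with hb
    have hΛ1sq : (inner ℂ (Λ (1 : A₀)) (Λ (1 : A₀)) : ℂ) = 1 := by
      rw [inner_self_eq_norm_sq_to_K, hΛ1]
      norm_num
    have hΛb : Λ b = Λ a - (starRingEnd ℂ c) • Λ 1 := by
      simp [hb, map_sub, map_smul]
    have hperp : (inner ℂ (Λ b) (Λ (1 : A₀)) : ℂ) = 0 := by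
      rw [hΛb, inner_sub_left, inner_smul_left, hΛ1sq, ← hc]
      simp
    have hperp' : (inner ℂ (Λ (1 : A₀)) (Λ b) : ℂ) = 0 := by
      rw [← inner_conj_symm, hperp, map_zero]
    have hdecomp : Λ a = Λ b + (starRingEnd ℂ c) • Λ 1 := by
      rw [hΛb]; abel
    -- norm identity
    have hcc : (starRingEnd ℂ) c * (starRingEnd ℂ) ((starRingEnd ℂ) c)
        = ((‖c‖ ^ 2 : ℝ) : ℂ) := by
      rw [Complex.conj_conj, mul_comm, Complex.mul_conj, Complex.normSq_eq_norm_sq]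
    have hnorm : ‖Λ a‖ ^ 2 = ‖Λ b‖ ^ 2 + ‖c‖ ^ 2 := by
      have h1 : (‖Λ a‖ : ℝ) ^ 2 = (inner ℂ (Λ a) (Λ a) : ℂ).re := by
        rw [inner_self_eq_norm_sq_to_K]
        simp [← Complex.ofReal_pow]
      have h2 : (‖Λ b‖ : ℝ) ^ 2 = (inner ℂ (Λ b) (Λ b) : ℂ).re := by
        rw [inner_self_eq_norm_sq_to_K]
        simp [← Complex.ofReal_pow]
      rw [h1, h2, hdecomp]
      rw [inner_add_add_self]
      simp only [inner_smul_left, inner_smul_right, hperp, hperp', hΛ1sq,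
        mul_zero, mul_one, zero_add, add_zero]
      rw [hcc, Complex.add_re, Complex.ofReal_re]
    -- inner identity
    have hTb : T (Λ a) = T (Λ b) + ((starRingEnd ℂ c) * αg) • Λ 1 := by
      rw [hdecomp, map_add, map_smul, heig, smul_smul]
    have hTbperp : (inner ℂ (T (Λ b)) (Λ (1 : A₀)) : ℂ) = 0 := by
      rw [hT_symm, heig, inner_smul_right, hperp, mul_zero]
    have hinner : (inner ℂ (T (Λ a)) (Λ a) : ℂ)
        = inner ℂ (T (Λ b)) (Λ b) + (‖c‖ ^ 2 * αg : ℝ) := by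
      rw [hTb, hdecomp]
      rw [inner_add_left, inner_add_right, inner_add_right]
      simp only [inner_smul_left, inner_smul_right, hperp', hΛ1sq, hTbperp,
        mul_zero, mul_one, add_zero, zero_add]
      congr 1
      rw [map_mul, Complex.conj_conj, Complex.conj_ofReal, ← mul_assoc,
        mul_comm ((starRingEnd ℂ) c) c, Complex.mul_conj, Complex.normSq_eq_norm_sq]
      push_cast
      ring
    have hgapb := hgap b hperp
    have hre : (inner ℂ (T (Λ a)) (Λ a) : ℂ).re
        = (inner ℂ (T (Λ b)) (Λ b) : ℂ).re + ‖c‖ ^ 2 * αg := by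
      rw [hinner, Complex.add_re, Complex.ofReal_re]
    rw [hre, hnorm]
    nlinarith [hgapb]
  · rintro ⟨Δ, hΔ, h⟩
    refine ⟨Δ, hΔ, fun a ha => ?_⟩
    have := h a
    rw [ha] at this
    simp at this
    linarith
end
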